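/- For every real ε with 0 < ε < 1/2 there exists δ > 0 such that for every natural number k the following holds: if u, v are natural numbers and a : B^k × B^(2^(2k)) → B^u, b : B^(2^(2k)) × B^k → B^v, t : B^u × B^v → Bool satisfy t(a(x,y), b(y,z)) = y(x,z) for at least (1−ε)·2^(2k + 2^(2k)) of all triples (x,y,z), then u + v ≥ δ·2^k. -/

import Mathlib

/-- `BS k` is the set of binary strings of length `k`. -/
abbrev BS (k : ℕ) := Fin k → Bool

open Finset Real

section AuxCounting

lemma aux_sum_pow_weight (N : ℕ) (θ : ℝ) :
    ∑ d : Fin N → Bool, θ ^ (univ.filter (fun i => d i = true)).card = (1 + θ) ^ N := by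
  have h : ∀ d : Fin N → Bool, θ ^ (univ.filter (fun i => d i = true)).card
      = ∏ i : Fin N, (if d i then θ else (1:ℝ)) := by
    intro d
    rw [Finset.prod_ite, Finset.prod_const, Finset.prod_const, one_pow, mul_one]
  simp_rw [h]
  rw [← Fintype.piFinset_univ,
    ← Finset.prod_univ_sum (fun _ : Fin N => (univ : Finset Bool))
      (fun _ b => if b = true then θ else (1:ℝ))]
  simp [add_comm]

lemma aux_card_ball_le (N : ℕ) (θ r : ℝ) (hθ0 : 0 < θ) (hθ1 : θ ≤ 1) :
    ((univ.filter (fun d : Fin N → Bool =>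
        ((univ.filter fun i => d i = true).card : ℝ) ≤ r)).card : ℝ) * θ ^ ⌊r⌋₊
      ≤ (1 + θ) ^ N := by
  set D := univ.filter (fun d : Fin N → Bool =>
        ((univ.filter fun i => d i = true).card : ℝ) ≤ r) with hD
  calc (D.card : ℝ) * θ ^ ⌊r⌋₊
      = ∑ _d ∈ D, θ ^ ⌊r⌋₊ := by rw [Finset.sum_const, nsmul_eq_mul]
    _ ≤ ∑ d ∈ D, θ ^ (univ.filter (fun i => d i = true)).card := by
        apply Finset.sum_le_sum
        intro d hd
        simp only [hD, Finset.mem_filter] at hd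
        exact pow_le_pow_of_le_one hθ0.le hθ1 (Nat.le_floor hd.2)
    _ ≤ ∑ d : Fin N → Bool, θ ^ (univ.filter (fun i => d i = true)).card := by
        apply Finset.sum_le_sum_of_subset_of_nonneg (Finset.filter_subset _ _)
        intro d _ _
        positivity
    _ = (1 + θ) ^ N := aux_sum_pow_weight N θ

lemma aux_half_card (k : ℕ) (e : (BS k × BS k) ≃ Fin (2 ^ (2 * k))) (c0 : Bool) :
    2 * (Finset.univ.filter (fun w : BS k × BS (2 ^ (2 * k)) × BS k =>
        c0 = w.2.1 (e (w.1, w.2.2)))).card ≤ 2 ^ (2 * k + 2 ^ (2 * k)) := by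
  have hinj : ∀ w ∈ univ.filter (fun w : BS k × BS (2 ^ (2 * k)) × BS k =>
        c0 = w.2.1 (e (w.1, w.2.2))), ∀ w' ∈ univ.filter (fun w : BS k × BS (2 ^ (2 * k)) × BS k =>
        c0 = w.2.1 (e (w.1, w.2.2))),
      (fun w : BS k × BS (2 ^ (2 * k)) × BS k =>
        (w.1, Function.update w.2.1 (e (w.1, w.2.2)) (!(w.2.1 (e (w.1, w.2.2)))), w.2.2)) w =
      (fun w => (w.1, Function.update w.2.1 (e (w.1, w.2.2)) (!(w.2.1 (e (w.1, w.2.2)))), w.2.2)) w'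
      → w = w' := by
    rintro ⟨x, y, z⟩ _ ⟨x', y', z'⟩ _ h
    simp only [Prod.mk.injEq] at h
    obtain ⟨hx, hy, hz⟩ := h
    subst hx; subst hz
    have hyy : y = y' := by
      funext j
      have := congrFun hy j
      by_cases hj : j = e (x, z)
      · subst hj
        simpa [Function.update_self] using this
      · simpa [Function.update_of_ne hj] using this
    subst hyy; rfl
  have hmaps : ∀ w ∈ univ.filter (fun w : BS k × BS (2 ^ (2 * k)) × BS k =>
        c0 = w.2.1 (e (w.1, w.2.2))),
      (w.1, Function.update w.2.1 (e (w.1, w.2.2)) (!(w.2.1 (e (w.1, w.2.2)))), w.2.2)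
        ∈ univ.filter (fun w : BS k × BS (2 ^ (2 * k)) × BS k =>
          ¬ (c0 = w.2.1 (e (w.1, w.2.2)))) := by
    rintro ⟨x, y, z⟩ hw
    simp only [Finset.mem_filter, Finset.mem_univ, true_and] at hw ⊢
    simp [Function.update_self, ← hw]
  have hle := Finset.card_le_card_of_injOn _ hmaps hinj
  have hsum := Finset.card_filter_add_card_filter_not (s := univ)
    (p := fun w : BS k × BS (2 ^ (2 * k)) × BS k => c0 = w.2.1 (e (w.1, w.2.2)))
  have hcardu : (univ : Finset (BS k × BS (2 ^ (2 * k)) × BS k)).card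
      = 2 ^ (2 * k + 2 ^ (2 * k)) := by
    simp [Finset.card_univ, pow_add, two_mul, pow_mul]
    ring
  omega

variable (k : ℕ) (e : (BS k × BS k) ≃ Fin (2 ^ (2 * k)))
  (u v : ℕ) (a : BS k → BS (2 ^ (2 * k)) → BS u)
  (b : BS (2 ^ (2 * k)) → BS k → BS v) (t : BS u → BS v → Bool)

/-- the number of pairs `(x,z)` on which the protocol errs, for a fixed `y` -/
def protErr (y : BS (2 ^ (2 * k))) : ℕ :=
  (univ.filter (fun p : BS k × BS k => ¬ (t (a p.1 y) (b y p.2) = y (e p)))).card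

lemma aux_card_bad_eq :
    (univ.filter (fun w : BS k × BS (2 ^ (2 * k)) × BS k =>
      ¬ (t (a w.1 w.2.1) (b w.2.1 w.2.2) = w.2.1 (e (w.1, w.2.2))))).card
    = ∑ y : BS (2 ^ (2 * k)), protErr k e u v a b t y := by
  rw [Finset.card_eq_sum_card_fiberwise
    (f := fun w : BS k × BS (2 ^ (2 * k)) × BS k => w.2.1) (t := univ)
    (fun x _ => mem_univ _)]
  apply Finset.sum_congr rfl
  intro y _
  refine Finset.card_bij' (fun w _ => (w.1, w.2.2)) (fun p _ => (p.1, y, p.2))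
    ?_ ?_ ?_ ?_
  · rintro ⟨x, y', z⟩ hw
    simp only [Finset.mem_filter, Finset.mem_univ, true_and, protErr] at hw ⊢
    obtain ⟨h1, h2⟩ := hw
    subst h2
    exact h1
  · rintro ⟨x, z⟩ hp
    simp only [protErr, Finset.mem_filter, Finset.mem_univ, true_and] at hp ⊢
    exact ⟨hp, trivial⟩
  · rintro ⟨x, y', z⟩ hw
    simp only [Finset.mem_filter, Finset.mem_univ, true_and] at hw
    simp [hw.2]
  · rintro ⟨x, z⟩ _
    rfl

lemma aux_wt_eq_err (y : BS (2 ^ (2 * k))) :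
    (univ.filter (fun i : Fin (2 ^ (2 * k)) =>
      (y i != t (a (e.symm i).1 y) (b y (e.symm i).2)) = true)).card
    = protErr k e u v a b t y := by
  refine Finset.card_bij' (fun i _ => e.symm i) (fun p _ => e p) ?_ ?_ ?_ ?_
  · intro i hi
    simp only [Finset.mem_filter, Finset.mem_univ, true_and, bne_iff_ne, ne_eq] at hi
    simp only [protErr, Finset.mem_filter, Finset.mem_univ, true_and, Equiv.apply_symm_apply]
    exact fun h => hi (h.symm)
  · intro p hp
    simp only [protErr, Finset.mem_filter, Finset.mem_univ, true_and] at hp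
    simp only [Finset.mem_filter, Finset.mem_univ, true_and, bne_iff_ne, ne_eq,
      Equiv.symm_apply_apply]
    exact fun h => hp (h.symm)
  · intro i _; simp
  · intro p _; simp

lemma aux_card_good_le (ε₂ : ℝ) :
    (univ.filter (fun y : BS (2 ^ (2 * k)) =>
        ((protErr k e u v a b t y : ℝ)) ≤ ε₂ * 2 ^ (2 * k))).card
    ≤ 2 ^ ((u + v) * 2 ^ k) *
      (univ.filter (fun d : Fin (2 ^ (2 * k)) → Bool =>
        ((univ.filter fun i => d i = true).card : ℝ) ≤ ε₂ * 2 ^ (2 * k))).card := by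
  classical
  set D := univ.filter (fun d : Fin (2 ^ (2 * k)) → Bool =>
        ((univ.filter fun i => d i = true).card : ℝ) ≤ ε₂ * 2 ^ (2 * k)) with hD
  have hcard : ((univ : Finset ((BS k → BS u) × (BS k → BS v))) ×ˢ D).card
      = 2 ^ ((u + v) * 2 ^ k) * D.card := by
    rw [Finset.card_product, Finset.card_univ]
    congr 1
    simp [Fintype.card_fun, ← pow_mul, ← pow_add, add_mul]
  rw [← hcard]
  apply Finset.card_le_card_of_injOn
    (fun y => (((fun x => a x y, fun z => b y z) :
        (BS k → BS u) × (BS k → BS v)),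
      fun i => y i != t (a (e.symm i).1 y) (b y (e.symm i).2)))
  · intro y hy
    simp only [Finset.mem_coe] at hy ⊢
    simp only [Finset.mem_filter, Finset.mem_univ, true_and] at hy
    rw [Finset.mem_product]
    refine ⟨Finset.mem_univ _, ?_⟩
    simp only [hD, Finset.mem_filter, Finset.mem_univ, true_and]
    rw [aux_wt_eq_err]
    exact hy
  · intro y _ y' _ h
    simp only [Prod.mk.injEq] at h
    obtain ⟨⟨h1, h2⟩, h3⟩ := h
    funext i
    have hc : t (a (e.symm i).1 y) (b y (e.symm i).2)
        = t (a (e.symm i).1 y') (b y' (e.symm i).2) := by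
      rw [congrFun h1, congrFun h2]
    have hbi := congrFun h3 i
    rw [hc] at hbi
    revert hbi
    cases y i <;> cases y' i <;>
      cases t (a (e.symm i).1 y') (b y' (e.symm i).2) <;> simp

lemma aux_card_good_lb (ε ε₂ : ℝ) (hε2 : 0 < ε₂)
    (hcard : (1 - ε) * 2 ^ (2 * k + 2 ^ (2 * k)) ≤
      ((univ.filter (fun w : BS k × BS (2 ^ (2 * k)) × BS k =>
          t (a w.1 w.2.1) (b w.2.1 w.2.2) = w.2.1 (e (w.1, w.2.2)))).card : ℝ)) :
    (1 - ε / ε₂) * 2 ^ (2 ^ (2 * k)) ≤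
      ((univ.filter (fun y : BS (2 ^ (2 * k)) =>
        ((protErr k e u v a b t y : ℝ)) ≤ ε₂ * 2 ^ (2 * k))).card : ℝ) := by
  have hsplit := Finset.card_filter_add_card_filter_not (s := univ)
    (p := fun w : BS k × BS (2 ^ (2 * k)) × BS k =>
      t (a w.1 w.2.1) (b w.2.1 w.2.2) = w.2.1 (e (w.1, w.2.2)))
  have hcardu : (univ : Finset (BS k × BS (2 ^ (2 * k)) × BS k)).card
      = 2 ^ (2 * k + 2 ^ (2 * k)) := by
    simp [Finset.card_univ, pow_add, two_mul, pow_mul]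
    ring
  rw [hcardu] at hsplit
  have hbad := aux_card_bad_eq k e u v a b t
  have hsum : ∑ y : BS (2 ^ (2 * k)), ((protErr k e u v a b t y : ℝ))
      ≤ ε * 2 ^ (2 * k + 2 ^ (2 * k)) := by
    have h1 : (∑ y : BS (2 ^ (2 * k)), ((protErr k e u v a b t y : ℝ)))
        = (((univ.filter (fun w : BS k × BS (2 ^ (2 * k)) × BS k =>
          ¬ (t (a w.1 w.2.1) (b w.2.1 w.2.2) = w.2.1 (e (w.1, w.2.2))))).card : ℕ) : ℝ) := by
      rw [hbad]; push_cast; ring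
    have h2 : ((2 : ℝ)) ^ (2 * k + 2 ^ (2 * k)) =
        (((univ.filter (fun w : BS k × BS (2 ^ (2 * k)) × BS k =>
          t (a w.1 w.2.1) (b w.2.1 w.2.2) = w.2.1 (e (w.1, w.2.2)))).card : ℝ))
        + (((univ.filter (fun w : BS k × BS (2 ^ (2 * k)) × BS k =>
          ¬ (t (a w.1 w.2.1) (b w.2.1 w.2.2) = w.2.1 (e (w.1, w.2.2))))).card : ℝ)) := by
      exact_mod_cast hsplit.symm
    rw [h1]
    nlinarith [hcard, h2]
  set B := univ.filter (fun y : BS (2 ^ (2 * k)) =>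
        ¬ (((protErr k e u v a b t y : ℝ)) ≤ ε₂ * 2 ^ (2 * k))) with hBdef
  have hBsum : ε₂ * 2 ^ (2 * k) * (B.card : ℝ)
      ≤ ∑ y : BS (2 ^ (2 * k)), ((protErr k e u v a b t y : ℝ)) := by
    calc ε₂ * 2 ^ (2 * k) * (B.card : ℝ) = ∑ _y ∈ B, ε₂ * 2 ^ (2 * k) := by
          rw [Finset.sum_const, nsmul_eq_mul]; ring
      _ ≤ ∑ y ∈ B, ((protErr k e u v a b t y : ℝ)) := by
          apply Finset.sum_le_sum
          intro y hy
          simp only [hBdef, Finset.mem_filter, Finset.mem_univ, true_and, not_le] at hy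
          exact hy.le
      _ ≤ ∑ y : BS (2 ^ (2 * k)), ((protErr k e u v a b t y : ℝ)) := by
          apply Finset.sum_le_sum_of_subset_of_nonneg (Finset.filter_subset _ _)
          intro y _ _; positivity
  have hGB := Finset.card_filter_add_card_filter_not (s := univ)
    (p := fun y : BS (2 ^ (2 * k)) =>
      ((protErr k e u v a b t y : ℝ)) ≤ ε₂ * 2 ^ (2 * k))
  have hcardY : (univ : Finset (BS (2 ^ (2 * k)))).card = 2 ^ (2 ^ (2 * k)) := by
    simp [Finset.card_univ]
  rw [hcardY] at hGB
  have hGBr : ((univ.filter (fun y : BS (2 ^ (2 * k)) =>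
        ((protErr k e u v a b t y : ℝ)) ≤ ε₂ * 2 ^ (2 * k))).card : ℝ) + (B.card : ℝ)
      = 2 ^ (2 ^ (2 * k)) := by
    rw [hBdef]; exact_mod_cast hGB
  have hBle : (B.card : ℝ) ≤ ε / ε₂ * 2 ^ (2 ^ (2 * k)) := by
    rw [div_mul_eq_mul_div, le_div_iff₀ hε2]
    have hpow : (0:ℝ) < 2 ^ (2 * k) := by positivity
    have h3 : ε₂ * 2 ^ (2 * k) * (B.card : ℝ) ≤ ε * 2 ^ (2 * k) * 2 ^ (2 ^ (2 * k)) := by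
      calc ε₂ * 2 ^ (2 * k) * (B.card : ℝ) ≤ ε * 2 ^ (2 * k + 2 ^ (2 * k)) :=
            le_trans hBsum hsum
        _ = ε * 2 ^ (2 * k) * 2 ^ (2 ^ (2 * k)) := by rw [pow_add]; ring
    nlinarith [h3, hpow]
  nlinarith [hGBr, hBle]

end AuxCounting

/-- For every `0 < ε < 1/2` there is a `δ > 0` such that for every `k`: if
`t(a(x,y), b(y,z))` agrees with the indexing predicate `y(x,z)` on at least a
`(1 - ε)`-fraction of the `2^(2k + 2^(2k))` input triples, then `u + v ≥ δ·2^k`. -/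
theorem approximate_indexing_lower_bound (ε : ℝ) (hε0 : 0 < ε) (hε : ε < 1 / 2) :
    ∃ δ : ℝ, 0 < δ ∧
      ∀ (k : ℕ) (e : (BS k × BS k) ≃ Fin (2 ^ (2 * k)))
        (u v : ℕ) (a : BS k → BS (2 ^ (2 * k)) → BS u)
        (b : BS (2 ^ (2 * k)) → BS k → BS v) (t : BS u → BS v → Bool),
        (1 - ε) * 2 ^ (2 * k + 2 ^ (2 * k)) ≤
          ((Finset.univ.filter (fun w : BS k × BS (2 ^ (2 * k)) × BS k =>
              t (a w.1 w.2.1) (b w.2.1 w.2.2) = w.2.1 (e (w.1, w.2.2)))).card : ℝ) →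
        δ * 2 ^ k ≤ (u + v : ℝ) := by
  obtain ⟨ε₂, hε₂⟩ : ∃ x : ℝ, x = 1/4 + ε/2 := ⟨_, rfl⟩
  obtain ⟨θ, hθ⟩ : ∃ x : ℝ, x = 3/4 + ε/2 := ⟨_, rfl⟩
  have hε₂0 : 0 < ε₂ := by rw [hε₂]; linarith
  have hεε₂ : ε < ε₂ := by rw [hε₂]; linarith
  have hθ0 : 0 < θ := by rw [hθ]; linarith
  have hθ1 : θ < 1 := by rw [hθ]; linarith
  have hc0 : 0 < 1 - ε / ε₂ := by
    have : ε / ε₂ < 1 := (div_lt_one hε₂0).mpr hεε₂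
    linarith
  have hc1 : 1 - ε / ε₂ < 1 := by
    have : 0 < ε / ε₂ := div_pos hε0 hε₂0
    linarith
  obtain ⟨L, hLdef⟩ : ∃ x : ℝ, x = 1 + ε₂ * Real.logb 2 θ - Real.logb 2 (1 + θ) := ⟨_, rfl⟩
  obtain ⟨C, hCdef⟩ : ∃ x : ℝ, x = - Real.logb 2 (1 - ε / ε₂) := ⟨_, rfl⟩
  have hC0 : 0 ≤ C := by
    rw [hCdef, neg_nonneg]
    exact Real.logb_nonpos one_lt_two hc0.le hc1.le
  -- L > 0
  have hL : 0 < L := by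
    have hlog2 : 0 < Real.log 2 := Real.log_pos one_lt_two
    have hlogθ : (θ - 1)/θ ≤ Real.log θ := by
      have h := Real.log_le_sub_one_of_pos (show (0:ℝ) < θ⁻¹ by positivity)
      rw [Real.log_inv] at h
      have : 1 - θ⁻¹ ≤ Real.log θ := by linarith
      calc (θ - 1)/θ = 1 - θ⁻¹ := by field_simp
        _ ≤ Real.log θ := this
    have hlog1θ : Real.log (1 + θ) ≤ Real.log 2 + ((1+θ)/2 - 1) := by
      have hp : (0:ℝ) < (1+θ)/2 := by linarith
      calc Real.log (1 + θ) = Real.log 2 + Real.log ((1+θ)/2) := by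
            rw [← Real.log_mul (by norm_num) (ne_of_gt hp)]
            congr 1
            ring
        _ ≤ Real.log 2 + ((1+θ)/2 - 1) :=
            add_le_add_right (Real.log_le_sub_one_of_pos hp) _
    have hnum : 0 < Real.log 2 + ε₂ * Real.log θ - Real.log (1 + θ) := by
      have h1 : ε₂ * ((θ - 1)/θ) ≤ ε₂ * Real.log θ :=
        mul_le_mul_of_nonneg_left hlogθ hε₂0.le
      have h2 : ε₂ * ((θ - 1)/θ) = ε₂ * (θ - 1) / θ := by ring
      have h3 : (θ - 1)/2 < ε₂ * (θ-1) / θ := by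
        rw [div_lt_div_iff₀ (by norm_num) hθ0]
        rw [hε₂, hθ]
        nlinarith
      nlinarith [h1, h2, h3, hlog1θ]
    have heq : L = (Real.log 2 + ε₂ * Real.log θ - Real.log (1 + θ)) / Real.log 2 := by
      rw [hLdef, Real.logb, Real.logb]
      field_simp
    rw [heq]
    positivity
  refine ⟨L / (2 * (C + 1)), div_pos hL (by linarith), ?_⟩
  intro k e u v a b t hcard
  have hKpos : (0:ℝ) < 2 ^ k := by positivity
  have hK1 : (1:ℝ) ≤ 2 ^ k := by exact_mod_cast Nat.one_le_two_pow
  -- u + v ≥ 1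
  have huv : 0 < u + v := by
    by_contra h
    push_neg at h
    have hu : u = 0 := by omega
    have hv : v = 0 := by omega
    subst hu; subst hv
    have hfilter : (univ.filter (fun w : BS k × BS (2 ^ (2 * k)) × BS k =>
          t (a w.1 w.2.1) (b w.2.1 w.2.2) = w.2.1 (e (w.1, w.2.2))))
        = (univ.filter (fun w : BS k × BS (2 ^ (2 * k)) × BS k =>
          t default default = w.2.1 (e (w.1, w.2.2)))) := by
      apply Finset.filter_congr
      intro w _
      rw [Subsingleton.elim (a w.1 w.2.1) default,
        Subsingleton.elim (b w.2.1 w.2.2) default]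
    rw [hfilter] at hcard
    have hhalf := aux_half_card k e (t default default)
    have hhalf' : 2 * ((univ.filter (fun w : BS k × BS (2 ^ (2 * k)) × BS k =>
          t default default = w.2.1 (e (w.1, w.2.2)))).card : ℝ)
        ≤ 2 ^ (2 * k + 2 ^ (2 * k)) := by exact_mod_cast hhalf
    have hpos : (0:ℝ) < 2 ^ (2 * k + 2 ^ (2 * k)) := by positivity
    nlinarith [hcard, hhalf', hpos]
  have huv1 : (1:ℝ) ≤ (u : ℝ) + (v : ℝ) := by
    have : (1:ℕ) ≤ u + v := huv
    exact_mod_cast this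
  -- main counting chain
  have hgood := aux_card_good_lb k e u v a b t ε ε₂ hε₂0 hcard
  have hle := aux_card_good_le k e u v a b t ε₂
  have hball := aux_card_ball_le (2 ^ (2 * k)) θ (ε₂ * 2 ^ (2 * k)) hθ0 hθ1.le
  set m := ⌊ε₂ * (2:ℝ) ^ (2 * k)⌋₊ with hm
  have hθm : (0:ℝ) ≤ θ ^ m := by positivity
  have hle' : ((univ.filter (fun y : BS (2 ^ (2 * k)) =>
        ((protErr k e u v a b t y : ℝ)) ≤ ε₂ * 2 ^ (2 * k))).card : ℝ)
      ≤ 2 ^ ((u + v) * 2 ^ k) *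
        ((univ.filter (fun d : Fin (2 ^ (2 * k)) → Bool =>
          ((univ.filter fun i => d i = true).card : ℝ) ≤ ε₂ * 2 ^ (2 * k))).card : ℝ) := by
    exact_mod_cast hle
  have hchain : (1 - ε / ε₂) * 2 ^ (2 ^ (2 * k)) * θ ^ m
      ≤ 2 ^ ((u + v) * 2 ^ k) * (1 + θ) ^ (2 ^ (2 * k)) := by
    calc (1 - ε / ε₂) * 2 ^ (2 ^ (2 * k)) * θ ^ m
        ≤ (2 ^ ((u + v) * 2 ^ k) *
            ((univ.filter (fun d : Fin (2 ^ (2 * k)) → Bool =>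
              ((univ.filter fun i => d i = true).card : ℝ) ≤ ε₂ * 2 ^ (2 * k))).card : ℝ))
            * θ ^ m :=
          mul_le_mul_of_nonneg_right (hgood.trans hle') hθm
      _ = 2 ^ ((u + v) * 2 ^ k) *
            (((univ.filter (fun d : Fin (2 ^ (2 * k)) → Bool =>
              ((univ.filter fun i => d i = true).card : ℝ) ≤ ε₂ * 2 ^ (2 * k))).card : ℝ)
            * θ ^ m) := by ring
      _ ≤ 2 ^ ((u + v) * 2 ^ k) * (1 + θ) ^ (2 ^ (2 * k)) :=
          mul_le_mul_of_nonneg_left hball (by positivity)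
  -- take logs base 2
  have hlhs : (0:ℝ) < (1 - ε / ε₂) * 2 ^ (2 ^ (2 * k)) * θ ^ m := by positivity
  have hlog := Real.logb_le_logb_of_le one_lt_two hlhs hchain
  have hLHS : Real.logb 2 ((1 - ε / ε₂) * 2 ^ (2 ^ (2 * k)) * θ ^ m)
      = Real.logb 2 (1 - ε / ε₂) + (2 ^ (2 * k) : ℕ) * 1 + m * Real.logb 2 θ := by
    rw [Real.logb_mul (by positivity) (by positivity),
      Real.logb_mul (by positivity) (by positivity),
      Real.logb_pow, Real.logb_pow, Real.logb_self_eq_one one_lt_two]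
  have hRHS : Real.logb 2 ((2:ℝ) ^ ((u + v) * 2 ^ k) * (1 + θ) ^ (2 ^ (2 * k)))
      = ((u + v) * 2 ^ k : ℕ) * 1 + (2 ^ (2 * k) : ℕ) * Real.logb 2 (1 + θ) := by
    rw [Real.logb_mul (by positivity) (by positivity),
      Real.logb_pow, Real.logb_pow, Real.logb_self_eq_one one_lt_two]
  rw [hLHS, hRHS] at hlog
  have hm_le : (m : ℝ) ≤ ε₂ * 2 ^ (2 * k) := Nat.floor_le (by positivity)
  have hlogθ_np : Real.logb 2 θ ≤ 0 := Real.logb_nonpos one_lt_two hθ0.le hθ1.le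
  have hmθ : ε₂ * 2 ^ (2 * k) * Real.logb 2 θ ≤ (m : ℝ) * Real.logb 2 θ :=
    mul_le_mul_of_nonpos_right hm_le hlogθ_np
  have key : Real.logb 2 (1 - ε / ε₂) + 2 ^ (2 * k) * L ≤ ((u:ℝ) + v) * 2 ^ k := by
    rw [hLdef]
    push_cast at hlog
    linarith [hlog, hmθ]
  -- endgame
  have hCk : Real.logb 2 (1 - ε / ε₂) = -C := by rw [hCdef]; ring
  rw [hCk] at key
  have hNsplit : (2:ℝ) ^ (2 * k) = 2 ^ k * 2 ^ k := by rw [two_mul, pow_add]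
  rw [hNsplit] at key
  by_cases hcase : (2:ℝ) ^ k * L ≤ 2 * C
  · have hδ2k : L / (2 * (C + 1)) * 2 ^ k ≤ 1 := by
      rw [div_mul_eq_mul_div, div_le_one (by linarith)]
      linarith only [hcase, hC0, hL]
    linarith only [hδ2k, huv1]
  · push_neg at hcase
    have hδL : L / (2 * (C + 1)) ≤ L / 2 := by
      apply div_le_div_of_nonneg_left hL.le (by norm_num)
      linarith
    have h2a : L / (2 * (C + 1)) * (2 ^ k * 2 ^ k) ≤ L / 2 * (2 ^ k * 2 ^ k) :=
      mul_le_mul_of_nonneg_right hδL (by positivity)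
    have h2b : (2:ℝ) ^ k * L ≤ 2 ^ k * 2 ^ k * L :=
      mul_le_mul_of_nonneg_right (le_mul_of_one_le_right hKpos.le hK1) hL.le
    have h2 : L / (2 * (C + 1)) * 2 ^ k * 2 ^ k ≤ ((u:ℝ) + v) * 2 ^ k := by
      linarith only [key, hcase, h2a, h2b]
    exact le_of_mul_le_mul_right h2 hKpos
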